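/- Let p > 1, let H(x) = x⁴ − (32p(p+1)/(p−1)²)x² + (32p(p+1)(p+3)/(p−1)³)x − 64p(p+1)²/(p−1)⁴, let x₀ be the largest real root of H, and let t₀ = √(2p/(p+1)) + √(2p/(p+1) − √(2p/(p+1))). Then x₀ > (2(p+1)/(p−1)) · t₀. -/
import Mathlib


/-- The quartic polynomial `L`. -/
noncomputable def Lpoly (p s : ℝ) : ℝ :=
  s ^ 4 - 32 * p / (p + 1) * s ^ 2 + 32 * p * (p + 3) / (p + 1) ^ 2 * s
    - 64 * p / (p + 1) ^ 2

/-- `t₀ = √(2p/(p+1)) + √(2p/(p+1) − √(2p/(p+1)))`. -/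
noncomputable def t0 (p : ℝ) : ℝ :=
  Real.sqrt (2 * p / (p + 1)) +
    Real.sqrt (2 * p / (p + 1) - Real.sqrt (2 * p / (p + 1)))

/-- The quartic polynomial `H` from Theorem 1.1. -/
noncomputable def Hpoly (p x : ℝ) : ℝ :=
  x ^ 4 - 32 * p * (p + 1) / (p - 1) ^ 2 * x ^ 2
    + 32 * p * (p + 1) * (p + 3) / (p - 1) ^ 3 * x
    - 64 * p * (p + 1) ^ 2 / (p - 1) ^ 4
set_option maxHeartbeats 1000000 in
/-- The largest real root `x₀` of `H` satisfies `x₀ > 2(p+1)t₀/(p−1)`. -/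
theorem largest_root_gt (p : ℝ) (hp : 1 < p) (x₀ : ℝ)
    (hroot : Hpoly p x₀ = 0) (hlargest : ∀ x : ℝ, x₀ < x → Hpoly p x ≠ 0) :
    2 * (p + 1) / (p - 1) * t0 p < x₀ := by
  have hp1 : (0:ℝ) < p + 1 := by linarith
  have hm : (0:ℝ) < p - 1 := by linarith
  have hp1' : (p:ℝ) + 1 ≠ 0 := ne_of_gt hp1
  have hm' : (p:ℝ) - 1 ≠ 0 := ne_of_gt hm
  set a : ℝ := Real.sqrt (2 * p / (p + 1)) with ha_def
  have hqpos : (0:ℝ) < 2 * p / (p + 1) := by positivity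
  have ha2 : a ^ 2 = 2 * p / (p + 1) := Real.sq_sqrt hqpos.le
  have hq1 : (1:ℝ) < 2 * p / (p + 1) := by
    rw [lt_div_iff₀ hp1]; linarith
  have hq2 : 2 * p / (p + 1) < 2 := by
    rw [div_lt_iff₀ hp1]; linarith
  have ha0 : 0 ≤ a := Real.sqrt_nonneg _
  have ha1 : 1 < a := by nlinarith [ha2]
  set b : ℝ := Real.sqrt (2 * p / (p + 1) - a) with hb_def
  have hqa : 0 < 2 * p / (p + 1) - a := by nlinarith [ha2]
  have hb0 : 0 < b := Real.sqrt_pos.mpr hqa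
  have hb2 : b ^ 2 = a ^ 2 - a := by
    rw [hb_def, Real.sq_sqrt hqa.le, ha2]
  have ht0 : t0 p = a + b := rfl
  -- scaling identity
  have stepB : ∀ s : ℝ, Hpoly p (2 * (p + 1) / (p - 1) * s)
      = ((p + 1) / (p - 1)) ^ 4 *
        ((2*s) ^ 4 - 16 * (a ^ 2) * (2*s) ^ 2 + 16 * (a ^ 2) * (3 - (a ^ 2)) * (2*s)
          - 16 * (a ^ 2) * (2 - (a ^ 2))) := by
    intro s
    rw [Hpoly, ha2]
    field_simp
    ring
  have stepA : (2*(a+b)) ^ 4 - 16 * (a ^ 2) * (2*(a+b)) ^ 2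
      + 16 * (a ^ 2) * (3 - (a ^ 2)) * (2*(a+b)) - 16 * (a ^ 2) * (2 - (a ^ 2))
      = 16 * a ^ 2 * (-((a - 1) * (2*a - 1) * (a + 1)) - 2 * (a ^ 2 - 1) * b) := by
    linear_combination (16*b^2 + 64*a*b + 48*a^2 - 16*a) * hb2
  set y : ℝ := 2 * (p + 1) / (p - 1) * t0 p with hy_def
  have hyneg : Hpoly p y < 0 := by
    rw [hy_def, ht0, stepB (a + b), stepA]
    apply mul_neg_of_pos_of_neg
    · positivity
    · apply mul_neg_of_pos_of_neg
      · positivity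
      · nlinarith [hb0, ha1]
  -- a large point where Hpoly is positive
  set C2 : ℝ := 32 * p * (p + 1) / (p - 1) ^ 2 with hC2
  set C1 : ℝ := 32 * p * (p + 1) * (p + 3) / (p - 1) ^ 3 with hC1
  set C0 : ℝ := 64 * p * (p + 1) ^ 2 / (p - 1) ^ 4 with hC0
  set M : ℝ := 1 + |C2| + |C1| + |C0| + |y| + |x₀| with hM_def
  clear_value M
  have habs : ∀ u : ℝ, 0 ≤ |u| := fun u => abs_nonneg u
  have hM1 : 1 ≤ M := by
    have := habs C2; have := habs C1; have := habs C0; have := habs y; have := habs x₀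
    rw [hM_def]; linarith
  have hMy : y < M := by
    have h1 := le_abs_self y
    have := habs C2; have := habs C1; have := habs C0; have := habs x₀
    rw [hM_def]; linarith
  have hMx : x₀ < M := by
    have h1 := le_abs_self x₀
    have := habs C2; have := habs C1; have := habs C0; have := habs y
    rw [hM_def]; linarith
  have hHM : 0 < Hpoly p M := by
    have hexp : Hpoly p M = M ^ 4 - C2 * M ^ 2 + C1 * M - C0 := by
      rw [Hpoly, hC2, hC1, hC0]
    rw [hexp]
    have h3 : |C2| + |C1| + |C0| ≤ M - 1 := by
      have := habs y; have := habs x₀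
      rw [hM_def]; linarith
    have e2 : C2 ≤ |C2| := le_abs_self C2
    have e1 : -|C1| ≤ C1 := neg_abs_le C1
    have e0 : C0 ≤ |C0| := le_abs_self C0
    have hM0 : (0:ℝ) ≤ M := le_trans zero_le_one hM1
    have hM2 : M ≤ M ^ 2 := by
      calc M = M * 1 := (mul_one M).symm
        _ ≤ M * M := mul_le_mul_of_nonneg_left hM1 hM0
        _ = M ^ 2 := (sq M).symm
    have hA : (1:ℝ) ≤ M ^ 2 := le_trans hM1 hM2
    have key : C2 * M ^ 2 - C1 * M + C0 ≤ (M - 1) * M ^ 2 := by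
      have p2 : C2 * M ^ 2 ≤ |C2| * M ^ 2 :=
        mul_le_mul_of_nonneg_right e2 (sq_nonneg M)
      have q1 : -C1 ≤ |C1| := neg_le_abs C1
      have q2 : -C1 * M ≤ |C1| * M := mul_le_mul_of_nonneg_right q1 hM0
      have q3 : |C1| * M ≤ |C1| * M ^ 2 := mul_le_mul_of_nonneg_left hM2 (habs C1)
      have p0 : |C0| ≤ |C0| * M ^ 2 := le_mul_of_one_le_right (habs C0) hA
      have h4 : (|C2| + |C1| + |C0|) * M ^ 2 ≤ (M - 1) * M ^ 2 :=
        mul_le_mul_of_nonneg_right h3 (sq_nonneg M)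
      linarith [p2, q2, q3, p0, h4, e0]
    have hB : (1:ℝ) ≤ M ^ 2 - M + 1 := by linarith
    have hprod : (1:ℝ) * 1 ≤ M ^ 2 * (M ^ 2 - M + 1) :=
      mul_le_mul hA hB (by linarith) (by linarith)
    have hring : M ^ 2 * (M ^ 2 - M + 1) = M ^ 4 - (M - 1) * M ^ 2 := by ring
    linarith
  -- intermediate value theorem
  have hcont : ContinuousOn (fun x => Hpoly p x) (Set.Icc y M) := by
    apply Continuous.continuousOn
    unfold Hpoly
    fun_prop
  have hivt := intermediate_value_Icc hMy.le hcont
  have h0mem : (0:ℝ) ∈ Set.Icc (Hpoly p y) (Hpoly p M) := ⟨hyneg.le, hHM.le⟩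
  obtain ⟨z, hzmem, hz0⟩ := hivt h0mem
  -- conclude
  by_contra hcon
  push_neg at hcon
  have hyz : y < z := by
    rcases lt_or_eq_of_le hzmem.1 with h | h
    · exact h
    · exfalso
      have hy0 : Hpoly p y = 0 := by rw [h]; exact hz0
      linarith
  exact hlargest z (lt_of_le_of_lt hcon hyz) hz0
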